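/- Let d ≥ 2 and n ≥ 1 be integers and let u, v ∈ [0,1]^n. The inner product of the qudit-encoded pure states satisfies ⟨Φ(u), Φ(v)⟩ = ∏_{i=1}^n cos^{d−1}( (u_i − v_i)π/2 ); in particular, the fidelity satisfies |⟨Φ(u), Φ(v)⟩|² = ∏_{i=1}^n cos^{2(d−1)}( |u_i − v_i| π/2 ). -/

import Mathlib

open MeasureTheory Metric Finset
open scoped ComplexOrder

noncomputable section

/-- Qudit encoding of a pixel value `u ∈ [0,1]`: the `j`-th component (0-indexed) is
`√(binom (d-1) j) · cos^{d-1-j}(πu/2) · sin^j(πu/2)`. -/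
def quditVec (d : ℕ) (u : ℝ) : Fin d → ℂ := fun j =>
  (Real.sqrt ((d - 1).choose j) *
    Real.cos (Real.pi * u / 2) ^ (d - 1 - (j : ℕ)) *
    Real.sin (Real.pi * u / 2) ^ (j : ℕ) : ℝ)

/-- Encoded product pure state `|Φ(u)⟩ = φ_d(u_1) ⊗ ⋯ ⊗ φ_d(u_n)`, with `(ℂ^d)^{⊗n}`
realized as functions `(Fin n → Fin d) → ℂ`. -/
def encState (d n : ℕ) (u : Fin n → ℝ) : (Fin n → Fin d) → ℂ := fun f =>
  ∏ i, quditVec d (u i) (f i)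

/-- Density matrix `ρ(u) = |Φ(u)⟩⟨Φ(u)|` of the encoded state. -/
def encRho (d n : ℕ) (u : Fin n → ℝ) :
    Matrix (Fin n → Fin d) (Fin n → Fin d) ℂ := fun a b =>
  encState d n u a * star (encState d n u b)

lemma qkey (d : ℕ) (hd : 1 ≤ d) (a b : ℝ) :
    (∑ j : Fin d, star (quditVec d a j) * quditVec d b j)
      = ((Real.cos ((a - b) * Real.pi / 2) : ℝ) : ℂ) ^ (d - 1) := by
  obtain ⟨m, rfl⟩ : ∃ m, d = m + 1 := ⟨d - 1, (Nat.succ_pred_eq_of_pos hd).symm⟩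
  simp only [Nat.add_sub_cancel]
  have hreal : (∑ j : Fin (m + 1),
      (Real.sqrt (m.choose j) * Real.cos (Real.pi * a / 2) ^ (m - (j:ℕ)) *
        Real.sin (Real.pi * a / 2) ^ (j:ℕ)) *
      (Real.sqrt (m.choose j) * Real.cos (Real.pi * b / 2) ^ (m - (j:ℕ)) *
        Real.sin (Real.pi * b / 2) ^ (j:ℕ)))
      = Real.cos ((a - b) * Real.pi / 2) ^ m := by
    have h1 : ∀ j : Fin (m + 1),
        (Real.sqrt (m.choose j) * Real.cos (Real.pi * a / 2) ^ (m - (j:ℕ)) *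
          Real.sin (Real.pi * a / 2) ^ (j:ℕ)) *
        (Real.sqrt (m.choose j) * Real.cos (Real.pi * b / 2) ^ (m - (j:ℕ)) *
          Real.sin (Real.pi * b / 2) ^ (j:ℕ))
        = (Real.sin (Real.pi * a / 2) * Real.sin (Real.pi * b / 2)) ^ (j:ℕ) *
          (Real.cos (Real.pi * a / 2) * Real.cos (Real.pi * b / 2)) ^ (m - (j:ℕ)) *
          (m.choose j : ℝ) := by
      intro j
      have hs : Real.sqrt (m.choose j) * Real.sqrt (m.choose j)
          = (m.choose j : ℝ) := Real.mul_self_sqrt (Nat.cast_nonneg _)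
      rw [mul_pow, mul_pow]
      linear_combination (Real.cos (Real.pi * a / 2) ^ (m - (j:ℕ)) *
        Real.cos (Real.pi * b / 2) ^ (m - (j:ℕ)) * Real.sin (Real.pi * a / 2) ^ (j:ℕ) *
        Real.sin (Real.pi * b / 2) ^ (j:ℕ)) * hs
    rw [Finset.sum_congr rfl (fun j _ => h1 j)]
    rw [Fin.sum_univ_eq_sum_range
      (fun j => (Real.sin (Real.pi * a / 2) * Real.sin (Real.pi * b / 2)) ^ j *
          (Real.cos (Real.pi * a / 2) * Real.cos (Real.pi * b / 2)) ^ (m - j) *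
          (m.choose j : ℝ))]
    rw [← add_pow]
    have : Real.sin (Real.pi * a / 2) * Real.sin (Real.pi * b / 2) +
        Real.cos (Real.pi * a / 2) * Real.cos (Real.pi * b / 2)
        = Real.cos ((a - b) * Real.pi / 2) := by
      rw [show (a - b) * Real.pi / 2 = Real.pi * a / 2 - Real.pi * b / 2 by ring,
        Real.cos_sub]; ring
    rw [this]
  calc (∑ j : Fin (m + 1), star (quditVec (m + 1) a j) * quditVec (m + 1) b j)
      = ∑ j : Fin (m + 1), (((Real.sqrt (m.choose j) * Real.cos (Real.pi * a / 2) ^ (m - (j:ℕ)) *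
        Real.sin (Real.pi * a / 2) ^ (j:ℕ)) *
      (Real.sqrt (m.choose j) * Real.cos (Real.pi * b / 2) ^ (m - (j:ℕ)) *
        Real.sin (Real.pi * b / 2) ^ (j:ℕ)) : ℝ) : ℂ) := by
        refine Finset.sum_congr rfl fun j _ => ?_
        simp only [quditVec, Nat.add_sub_cancel, Complex.star_def, map_mul, Complex.conj_ofReal, Complex.ofReal_mul]
    _ = ((Real.cos ((a - b) * Real.pi / 2) : ℝ) : ℂ) ^ m := by
        rw [← Complex.ofReal_sum, hreal, Complex.ofReal_pow]

/-- inner product and fidelity of qudit-encoded pure states. -/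
theorem stmt4 (d n : ℕ) (hd : 2 ≤ d) (hn : 1 ≤ n)
    (u v : Fin n → ℝ) (hu : ∀ i, u i ∈ Set.Icc (0 : ℝ) 1)
    (hv : ∀ i, v i ∈ Set.Icc (0 : ℝ) 1) :
    (∑ f : Fin n → Fin d, star (encState d n u f) * encState d n v f)
        = ∏ i, (Real.cos ((u i - v i) * Real.pi / 2) : ℂ) ^ (d - 1) ∧
      ‖∑ f : Fin n → Fin d, star (encState d n u f) * encState d n v f‖ ^ 2
        = ∏ i, Real.cos (|u i - v i| * Real.pi / 2) ^ (2 * (d - 1)) := by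
  have hd1 : 1 ≤ d := le_trans one_le_two hd
  have h1 : (∑ f : Fin n → Fin d, star (encState d n u f) * encState d n v f)
      = ∏ i, (Real.cos ((u i - v i) * Real.pi / 2) : ℂ) ^ (d - 1) := by
    calc (∑ f : Fin n → Fin d, star (encState d n u f) * encState d n v f)
        = ∑ f : Fin n → Fin d,
            ∏ i, star (quditVec d (u i) (f i)) * quditVec d (v i) (f i) :=
          Finset.sum_congr rfl fun f _ => by
            simp only [encState, Complex.star_def, map_prod, ← Finset.prod_mul_distrib]
      _ = ∏ i, ∑ j : Fin d, star (quditVec d (u i) j) * quditVec d (v i) j :=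
          (Fintype.prod_sum (fun i j => star (quditVec d (u i) j) * quditVec d (v i) j)).symm
      _ = ∏ i, (Real.cos ((u i - v i) * Real.pi / 2) : ℂ) ^ (d - 1) :=
          Finset.prod_congr rfl fun i _ => qkey d hd1 (u i) (v i)
  refine ⟨h1, ?_⟩
  rw [h1]
  have h2 : (∏ i, (Real.cos ((u i - v i) * Real.pi / 2) : ℂ) ^ (d - 1))
      = ((∏ i, Real.cos ((u i - v i) * Real.pi / 2) ^ (d - 1) : ℝ) : ℂ) := by
    rw [Complex.ofReal_prod]
    exact Finset.prod_congr rfl fun i _ => (Complex.ofReal_pow _ _).symm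
  rw [h2, Complex.norm_real, Real.norm_eq_abs, sq_abs, ← Finset.prod_pow]
  refine Finset.prod_congr rfl fun i _ => ?_
  have hc : Real.cos (|u i - v i| * Real.pi / 2) = Real.cos ((u i - v i) * Real.pi / 2) := by
    rw [show |u i - v i| * Real.pi / 2 = |(u i - v i) * Real.pi / 2| by
      rw [abs_div, abs_mul, abs_of_nonneg Real.pi_pos.le]
      norm_num, Real.cos_abs]
  rw [hc, ← pow_mul, mul_comm (d-1) 2]

end
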